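/- Let ĥ, v ∈ ℂⁿ and η ≥ 0. Then (|ĥᴴv| + η‖v‖)² is the greatest element of the set { |(ĥ+e)ᴴv|² : e ∈ ℂⁿ, ‖e‖ ≤ η }; that is, the worst-case maximization max_{‖e‖≤η} |(ĥ+e)ᴴv|² has optimal value (|ĥᴴv| + η‖v‖)², and this value is attained. -/

import Mathlib

open Matrix

lemma dot_eq_inner (n : ℕ) (e v : Fin n → ℂ) :
    star e ⬝ᵥ v = @inner ℂ (EuclideanSpace ℂ (Fin n)) _ (WithLp.toLp 2 e) (WithLp.toLp 2 v) := by
  simp [dotProduct, PiLp.inner_apply, RCLike.inner_apply, mul_comm]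

lemma cs_bound (n : ℕ) (e v : Fin n → ℂ) :
    ‖star e ⬝ᵥ v‖ ≤ Real.sqrt (∑ i, ‖e i‖ ^ 2) * Real.sqrt (∑ i, ‖v i‖ ^ 2) := by
  rw [dot_eq_inner]
  have h := @norm_inner_le_norm ℂ (EuclideanSpace ℂ (Fin n)) _ _ _ (WithLp.toLp 2 e) (WithLp.toLp 2 v)
  simpa [EuclideanSpace.norm_eq] using h

set_option maxHeartbeats 2000000 in
/-- Worst-case maximization: (|ĥᴴv| + η‖v‖)² is the greatest element of
{ |(ĥ+e)ᴴv|² : ‖e‖ ≤ η }. -/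
theorem worst_case_max
    (n : ℕ) (hhat v : Fin n → ℂ) (η : ℝ) (hη : 0 ≤ η) :
    IsGreatest
      { y : ℝ | ∃ e : Fin n → ℂ, Real.sqrt (∑ i, ‖e i‖ ^ 2) ≤ η ∧
          y = ‖star (hhat + e) ⬝ᵥ v‖ ^ 2 }
      ((‖star hhat ⬝ᵥ v‖ + η * Real.sqrt (∑ i, ‖v i‖ ^ 2)) ^ 2) := by
  set a : ℂ := star hhat ⬝ᵥ v with ha
  set N : ℝ := Real.sqrt (∑ i, ‖v i‖ ^ 2) with hN
  have hN0 : 0 ≤ N := Real.sqrt_nonneg _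
  have hNsq : N ^ 2 = ∑ i, ‖v i‖ ^ 2 := by
    rw [hN, Real.sq_sqrt]
    exact Finset.sum_nonneg fun i _ => sq_nonneg _
  constructor
  · -- membership: construct the extremal e
    by_cases hv : N = 0
    · refine ⟨0, by simpa using hη, ?_⟩
      simp [hv, ha]
    · have hNpos : 0 < N := lt_of_le_of_ne hN0 (Ne.symm hv)
      set u : ℂ := if a = 0 then 1 else (starRingEnd ℂ) a / ‖a‖ with hu
      have hunorm : ‖u‖ = 1 := by
        rw [hu]; split_ifs with h
        · simp
        · rw [norm_div]
          rw [RCLike.norm_conj, Complex.norm_real, Real.norm_of_nonneg (norm_nonneg a)]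
          exact div_self (norm_ne_zero_iff.mpr h)
      set c : ℂ := ((η / N : ℝ) : ℂ) * u with hc
      refine ⟨fun i => c * v i, ?_, ?_⟩
      · have : ∀ i, ‖c * v i‖ ^ 2 = (η / N) ^ 2 * ‖v i‖ ^ 2 := by
          intro i
          rw [norm_mul, hc, norm_mul, hunorm, Complex.norm_real]
          rw [Real.norm_of_nonneg (div_nonneg hη hN0)]
          ring
        rw [Finset.sum_congr rfl fun i _ => this i, ← Finset.mul_sum, ← hNsq,
          Real.sqrt_mul (sq_nonneg _), Real.sqrt_sq (div_nonneg hη hN0),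
          Real.sqrt_sq hN0]
        rw [div_mul_cancel₀ _ (ne_of_gt hNpos)]
      · have hdot : star (hhat + fun i => c * v i) ⬝ᵥ v
            = a + (starRingEnd ℂ) c * (∑ i, (‖v i‖ : ℂ) ^ 2) := by
          simp only [dotProduct, Pi.add_apply, Pi.star_apply, star_add, add_mul,
            Finset.sum_add_distrib, ha]
          congr 1
          rw [Finset.mul_sum]
          refine Finset.sum_congr rfl fun i _ => ?_
          simp only [star_mul', Complex.star_def]
          rw [mul_assoc]
          congr 1
          rw [← Complex.normSq_eq_conj_mul_self, Complex.normSq_eq_norm_sq]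
          norm_cast
        have hvsum : (∑ i, (‖v i‖ : ℂ) ^ 2) = ((N ^ 2 : ℝ) : ℂ) := by
          push_cast [hNsq]; ring_nf
        rw [hdot, hvsum]
        have hcconj : (starRingEnd ℂ) c = ((η / N : ℝ) : ℂ) * (starRingEnd ℂ) u := by
          rw [hc]; simp
        rw [hcconj]
        by_cases hA : a = 0
        · have hu1 : u = 1 := by rw [hu, if_pos hA]
          rw [hA, hu1]
          simp only [_root_.map_one, mul_one, zero_add, norm_zero]
          have hcast : ((η / N : ℝ) : ℂ) * ((N ^ 2 : ℝ) : ℂ) = ((η * N : ℝ) : ℂ) := by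
            have h1 : (N : ℂ) ≠ 0 := by exact_mod_cast ne_of_gt hNpos
            push_cast
            field_simp [h1]
          rw [hcast, Complex.norm_real, Real.norm_of_nonneg (mul_nonneg hη hN0)]
        · have hucon : (starRingEnd ℂ) u = a / ‖a‖ := by
            rw [hu, if_neg hA]
            simp
          rw [hucon]
          have hna : (0:ℝ) < ‖a‖ := norm_pos_iff.mpr hA
          have key : a + ((η / N : ℝ) : ℂ) * (a / ‖a‖) * ((N ^ 2 : ℝ) : ℂ)
              = (((‖a‖ + η * N) / ‖a‖ : ℝ) : ℂ) * a := by
            have h1 : (N : ℂ) ≠ 0 := by exact_mod_cast ne_of_gt hNpos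
            have h2 : ((‖a‖ : ℝ) : ℂ) ≠ 0 := by
              exact_mod_cast ne_of_gt hna
            push_cast
            field_simp [h1, h2]
          rw [key, norm_mul, Complex.norm_real,
            Real.norm_of_nonneg (div_nonneg
              (add_nonneg (norm_nonneg a) (mul_nonneg hη hN0)) (norm_nonneg a))]
          rw [div_mul_cancel₀ _ (ne_of_gt hna)]
  · -- upper bound
    rintro y ⟨e, he, rfl⟩
    have h1 : star (hhat + e) ⬝ᵥ v = a + star e ⬝ᵥ v := by
      rw [ha, star_add, add_dotProduct]
    rw [h1]
    have h2 : ‖a + star e ⬝ᵥ v‖ ≤ ‖a‖ + η * N := by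
      refine (norm_add_le _ _).trans (add_le_add_right ?_ _)
      exact (cs_bound n e v).trans (mul_le_mul_of_nonneg_right he hN0)
    exact pow_le_pow_left₀ (norm_nonneg _) h2 2
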